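/- arXiv:2410.09900 — 2 statements merged into one kernel-verified Lean document; each statement's English description precedes it below -/
import Mathlib

section
/- With the expected values E_{00} = E_{01} = (2^{n-1}-α)/(√2 s) and E_{10} = -E_{11} = α/(√2 s) where s = √((2^{n-2}-α)² + 2^{2(n-2)}), and biases p_0 = 1 - α/2^{n-1}, p_1 = α/2^{n-1}, q_0 = q_1 = 1/2, the value p_0 q_0 E_{00} + p_0 q_1 E_{01} + p_1 q_0 E_{10} - p_1 q_1 E_{11} equals √2·√((2^{n-2}-α)² + 2^{2(n-2)})/2^{n-1}. -/
/-- The quantum value achieved by Protocol 1 for the biased CHSH game from the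
`(n-1,1)`-grouped THRESHOLD game. -/
theorem protocol1_value (n : ℕ) (hn : 2 ≤ n) (α : ℝ)
    (h0 : 0 ≤ α) (h1 : α ≤ 2 ^ (n - 1))
    (hs : (0 : ℝ) < (2 ^ (n - 2) - α) ^ 2 + 2 ^ (2 * (n - 2))) :
    let s : ℝ := Real.sqrt ((2 ^ (n - 2) - α) ^ 2 + 2 ^ (2 * (n - 2)))
    let E00 : ℝ := (2 ^ (n - 1) - α) / (Real.sqrt 2 * s)
    let E01 : ℝ := (2 ^ (n - 1) - α) / (Real.sqrt 2 * s)
    let E10 : ℝ := α / (Real.sqrt 2 * s)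
    let E11 : ℝ := -(α / (Real.sqrt 2 * s))
    (1 - α / 2 ^ (n - 1)) * (1 / 2) * E00
      + (1 - α / 2 ^ (n - 1)) * (1 / 2) * E01
      + (α / 2 ^ (n - 1)) * (1 / 2) * E10
      - (α / 2 ^ (n - 1)) * (1 / 2) * E11
      = Real.sqrt 2 * s / 2 ^ (n - 1) := by
  intro s E00 E01 E10 E11
  show (1 - α / 2 ^ (n - 1)) * (1 / 2) * E00
      + (1 - α / 2 ^ (n - 1)) * (1 / 2) * E01
      + (α / 2 ^ (n - 1)) * (1 / 2) * E10
      - (α / 2 ^ (n - 1)) * (1 / 2) * E11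
      = Real.sqrt 2 * s / 2 ^ (n - 1)
  have hs' : 0 < s := Real.sqrt_pos.mpr hs
  have hsq : s ^ 2 = (2 ^ (n - 2) - α) ^ 2 + 2 ^ (2 * (n - 2)) := Real.sq_sqrt hs.le
  have h2 : (0:ℝ) < Real.sqrt 2 := Real.sqrt_pos.mpr (by norm_num)
  have hr2 : Real.sqrt 2 ^ 2 = 2 := Real.sq_sqrt (by norm_num)
  have ht : (0:ℝ) < 2 ^ (n - 2) := by positivity
  have e1 : (2:ℝ) ^ (n - 1) = 2 * 2 ^ (n - 2) := by
    rw [show n - 1 = (n - 2) + 1 from by omega, pow_succ]; ring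
  have e2 : (2:ℝ) ^ (2 * (n - 2)) = 2 ^ (n - 2) * 2 ^ (n - 2) := by
    rw [two_mul, pow_add]
  simp only [E00, E01, E10, E11]
  rw [e2] at hsq
  rw [e1]
  have key : Real.sqrt 2 * s * (Real.sqrt 2 * s)
      = 2 * ((2 ^ (n - 2) - α) ^ 2 + 2 ^ (n - 2) * 2 ^ (n - 2)) := by
    nlinarith [hsq, hr2]
  have hne : Real.sqrt 2 * s ≠ 0 := by positivity
  have e3 : (2:ℝ) ^ ((n - 2) * 2) = ((2:ℝ) ^ (n - 2)) ^ 2 := pow_mul 2 (n - 2) 2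
  have e4 : (2:ℝ) ^ ((n - 2) * 3) = ((2:ℝ) ^ (n - 2)) ^ 3 := pow_mul 2 (n - 2) 3
  field_simp
  linear_combination (-2 : ℝ) * key + 8 * e3
end

section
/- Let n be even, t = n/2, k even with 2 ≤ k ≤ n/2, μ_j = C(n-k, j), w_j = C(k, j). Then 2^k(Σ_{i=0}^{t-k-1} μ_i + Σ_{i=t}^{n-k} μ_i) + μ_{t-k}Σ_{j=1}^{k-1} w_j - Σ_{i=1}^{k-1} μ_{t-i}(Σ_{j=0}^{i-1} w_j - Σ_{j=i}^{k} w_j) = 2^n - 2μ_{t-k} - 2Σ_{i=1}^{k-1} μ_{t-i}(Σ_{j=0}^{i-1} w_j). -/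
open Finset

/-- Binomial identity giving the classical value of the MAJORITY game with
`(n-k,k)` grouping for even `k` (Lemma 2). -/
theorem majority_classical_identity (n k : ℕ) (hn : Even n) (hk : Even k)
    (h2 : 2 ≤ k) (hkn : 2 * k ≤ n) :
    let t := n / 2
    let μ : ℕ → ℤ := fun j => (Nat.choose (n - k) j : ℤ)
    let w : ℕ → ℤ := fun j => (Nat.choose k j : ℤ)
    2 ^ k * ((∑ i ∈ range (t - k), μ i) + ∑ i ∈ Icc t (n - k), μ i)
      + μ (t - k) * ∑ j ∈ Icc 1 (k - 1), w j
      - ∑ i ∈ Icc 1 (k - 1), μ (t - i) *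
          ((∑ j ∈ range i, w j) - ∑ j ∈ Icc i k, w j)
      = 2 ^ n - 2 * μ (t - k)
        - 2 * ∑ i ∈ Icc 1 (k - 1), μ (t - i) * ∑ j ∈ range i, w j := by
  intro t μ w
  have hn2 : 2 * (n / 2) = n := by obtain ⟨m, hm⟩ := hn; omega
  have htk : k ≤ t := by simp only [t]; omega
  have htn : t ≤ n - k := by simp only [t]; omega
  -- sum of all binomials w over range (k+1)
  have h1 : ∑ j ∈ range (k + 1), w j = 2 ^ k := by
    simp only [w]
    rw [← Nat.cast_sum, Nat.sum_range_choose]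
    push_cast; ring
  have hw : ∀ i, i ≤ k →
      (∑ j ∈ range i, w j) + (∑ j ∈ Icc i k, w j) = 2 ^ k := by
    intro i hi
    rw [← h1, range_eq_Ico, ← Finset.Ico_add_one_right_eq_Icc,
      Finset.sum_Ico_consecutive _ (Nat.zero_le i) (by omega), range_eq_Ico]
  -- middle w-sum
  have E2 : ∑ j ∈ Icc 1 (k - 1), w j = 2 ^ k - 2 := by
    have h0 := hw 1 (by omega)
    have e : Icc 1 k = Icc 1 (k - 1 + 1) := by rw [Nat.sub_add_cancel (by omega)]
    rw [e, Finset.sum_Icc_succ_top (by omega), Nat.sub_add_cancel (by omega)] at h0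
    have hw0 : ∑ j ∈ range 1, w j = 1 := by simp [w]
    have hwk : w k = 1 := by simp [w]
    linarith
  -- each middle term
  have hIcc1 : ∑ i ∈ Icc 1 (k - 1), μ (t - i) *
        ((∑ j ∈ range i, w j) - ∑ j ∈ Icc i k, w j)
      = 2 * (∑ i ∈ Icc 1 (k - 1), μ (t - i) * ∑ j ∈ range i, w j)
        - 2 ^ k * ∑ i ∈ Icc 1 (k - 1), μ (t - i) := by
    rw [Finset.mul_sum, Finset.mul_sum, ← Finset.sum_sub_distrib]
    apply Finset.sum_congr rfl
    intro i hi
    have hik : i ≤ k := by simp only [mem_Icc] at hi; omega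
    linear_combination (-(μ (t - i))) * hw i hik
  -- reindexing the μ sum
  have hM : (∑ i ∈ Icc 1 (k - 1), μ (t - i)) + μ (t - k)
      = ∑ j ∈ Icc (t - k) (t - 1), μ j := by
    have step1 : ∑ i ∈ Icc 1 k, μ (t - i)
        = (∑ i ∈ Icc 1 (k - 1), μ (t - i)) + μ (t - k) := by
      have e : Icc 1 k = Icc 1 (k - 1 + 1) := by rw [Nat.sub_add_cancel (by omega)]
      rw [e, Finset.sum_Icc_succ_top (by omega), Nat.sub_add_cancel (by omega)]
    rw [← step1, ← Finset.Ico_add_one_right_eq_Icc, ← Finset.Ico_add_one_right_eq_Icc,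
      Finset.sum_Ico_eq_sum_range, Finset.sum_Ico_eq_sum_range]
    have e1 : k + 1 - 1 = k := by omega
    have e2 : t - 1 + 1 - (t - k) = k := by omega
    rw [e1, e2, ← Finset.sum_range_reflect (fun i => μ (t - k + i)) k]
    apply Finset.sum_congr rfl
    intro i hi
    simp only [mem_range] at hi
    congr 1
    omega
  -- total μ sum
  have hA3 : (∑ i ∈ range (t - k), μ i) + (∑ i ∈ Icc (t - k) (t - 1), μ i)
      + (∑ i ∈ Icc t (n - k), μ i) = 2 ^ (n - k) := by
    have h2' : ∑ j ∈ range (n - k + 1), μ j = 2 ^ (n - k) := by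
      simp only [μ]
      rw [← Nat.cast_sum, Nat.sum_range_choose]
      push_cast; ring
    rw [← h2', range_eq_Ico, ← Finset.Ico_add_one_right_eq_Icc, ← Finset.Ico_add_one_right_eq_Icc]
    rw [show t - 1 + 1 = t from by omega]
    rw [Finset.sum_Ico_consecutive _ (Nat.zero_le _) (by omega : t - k ≤ t),
      Finset.sum_Ico_consecutive _ (Nat.zero_le _) (by omega : t ≤ n - k + 1), range_eq_Ico]
  have hpow : (2 : ℤ) ^ n = 2 ^ k * 2 ^ (n - k) := by
    rw [← pow_add]; congr 1; omega
  linear_combination ((2 : ℤ) ^ k) * hA3 + ((2 : ℤ) ^ k) * hM - hpow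
    + (μ (t - k)) * E2 - hIcc1
end
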